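/- Let φ° be a norm on ℝ^N whose unit ball is the zonotope W_1 = Σ_{k=1}^m 2β_k(−e_k, e_k), with e_k ∈ ℤ^N spanning ℝ^N and β_k > 0 rational. Then there exists ℓ_1 > 0 such that for every ε > 0 and every i ∈ εℤ^N with φ°(i) ≥ 2εℓ_1, there exists j ∈ εℤ^N, j ≠ 0, with φ°(j) ≤ εℓ_1 and φ°(i) = φ°(j) + φ°(i − j). -/

import Mathlib

open scoped BigOperators

noncomputable def latPt (N : ℕ) (ε : ℝ) (i : Fin N → ℤ) : Fin N → ℝ :=
  fun k => ε * (i k : ℝ)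

def IsNorm (N : ℕ) (φ : (Fin N → ℝ) → ℝ) : Prop :=
  (∀ v, φ v = 0 ↔ v = 0) ∧ (∀ (c : ℝ) v, φ (c • v) = |c| * φ v) ∧
    (∀ v w, φ (v + w) ≤ φ v + φ w)

def PhiLip (N : ℕ) (ε : ℝ) (φ : (Fin N → ℝ) → ℝ) (u : (Fin N → ℤ) → ℝ) : Prop :=
  ∀ i j, |u i - u j| ≤ φ (latPt N ε i - latPt N ε j)

noncomputable def dminus (N : ℕ) (ε : ℝ) (φ : (Fin N → ℝ) → ℝ)
    (u : (Fin N → ℤ) → ℝ) (i : Fin N → ℤ) : ℝ :=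
  sSup {x : ℝ | ∃ j, 0 ≤ u j ∧ x = u j - φ (latPt N ε i - latPt N ε j)}

noncomputable def sdminus (N : ℕ) (ε : ℝ) (φ : (Fin N → ℝ) → ℝ)
    (u : (Fin N → ℤ) → ℝ) (i : Fin N → ℤ) : ℝ :=
  sInf {x : ℝ | ∃ j, u j ≤ 0 ∧ x = dminus N ε φ u j + φ (latPt N ε i - latPt N ε j)}

noncomputable def dplus (N : ℕ) (ε : ℝ) (φ : (Fin N → ℝ) → ℝ)
    (u : (Fin N → ℤ) → ℝ) (i : Fin N → ℤ) : ℝ :=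
  sInf {x : ℝ | ∃ j, u j ≤ 0 ∧ x = u j + φ (latPt N ε i - latPt N ε j)}

noncomputable def sdplus (N : ℕ) (ε : ℝ) (φ : (Fin N → ℝ) → ℝ)
    (u : (Fin N → ℤ) → ℝ) (i : Fin N → ℤ) : ℝ :=
  sSup {x : ℝ | ∃ j, 0 ≤ u j ∧ x = dplus N ε φ u j - φ (latPt N ε i - latPt N ε j)}

noncomputable def sdfun (N : ℕ) (ε : ℝ) (φ : (Fin N → ℝ) → ℝ)
    (u : (Fin N → ℤ) → ℝ) (i : Fin N → ℤ) : ℝ :=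
  (sdplus N ε φ u i + sdminus N ε φ u i) / 2

theorem additive_decomposition_rational (N m : ℕ)
    (e : Fin m → Fin N → ℤ) (β : Fin m → ℝ)
    (hβ : ∀ k, 0 < β k) (hrat : ∀ k, ∃ q : ℚ, β k = (q : ℝ))
    (hspan : Submodule.span ℝ (Set.range fun k => fun n => ((e k n : ℝ))) = ⊤)
    (φ : (Fin N → ℝ) → ℝ) (hφ : IsNorm N φ)
    (hball : {x | φ x < 1} = {x : Fin N → ℝ | ∃ lam : Fin m → ℝ,
      (∀ k, |lam k| < 1) ∧ x = fun n => ∑ k, 2 * β k * lam k * (e k n : ℝ)}) :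
    ∃ ℓ1 > (0 : ℝ), ∀ ε > (0 : ℝ), ∀ i : Fin N → ℤ,
      2 * ε * ℓ1 ≤ φ (latPt N ε i) →
      ∃ j : Fin N → ℤ, j ≠ 0 ∧ φ (latPt N ε j) ≤ ε * ℓ1 ∧
        φ (latPt N ε i) = φ (latPt N ε j) + φ (latPt N ε i - latPt N ε j) := by
  classical
  obtain ⟨hzero, hhom, htriangle⟩ := hφ
  have hφ0 : φ 0 = 0 := (hzero 0).mpr rfl
  have hφneg : ∀ v, φ (-v) = φ v := by
    intro v
    have := hhom (-1) v
    simpa using this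
  have hφnonneg : ∀ v, 0 ≤ φ v := by
    intro v
    have h2 := htriangle v (-v)
    rw [add_neg_cancel, hφ0, hφneg] at h2
    linarith
  -- rational data
  choose q hq using hrat
  set L : ℕ := ∏ k, (q k).den with hLdef
  have hLpos : 0 < L := Finset.prod_pos (fun k _ => (q k).pos)
  have hL1 : (1:ℝ) ≤ (L:ℝ) := by exact_mod_cast hLpos
  set c : Fin m → ℤ := fun k => 2 * (q k).num * ((∏ j ∈ Finset.univ.erase k, (q j).den : ℕ) : ℤ)
    with hcdef
  have hc : ∀ k, ((c k : ℤ) : ℝ) = 2 * β k * (L : ℝ) := by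
    intro k
    have hLk : ((q k).den : ℕ) * ∏ j ∈ Finset.univ.erase k, (q j).den = L := by
      rw [hLdef]
      exact Finset.mul_prod_erase Finset.univ (fun j => (q j).den) (Finset.mem_univ k)
    have hLkR : ((L:ℕ):ℝ) = ((q k).den : ℝ) * ((∏ j ∈ Finset.univ.erase k, (q j).den : ℕ) : ℝ) := by
      rw [← hLk]; push_cast; ring
    have hden : ((q k).den : ℝ) ≠ 0 := by
      exact_mod_cast (q k).den_nz
    rw [hq k, Rat.cast_def, hLkR, hcdef]
    push_cast
    field_simp
  -- the strict upper bound from the ball description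
  have upper : ∀ (lam : Fin m → ℝ) (s : ℝ), 0 < s → (∀ k, |lam k| < s) →
      φ (fun n => ∑ k, 2 * β k * lam k * (e k n : ℝ)) < s := by
    intro lam s hs hlam
    have hy : φ (fun n => ∑ k, 2 * β k * (lam k / s) * (e k n : ℝ)) < 1 := by
      have hmem : (fun n => ∑ k, 2 * β k * (lam k / s) * (e k n : ℝ)) ∈
          {x : Fin N → ℝ | ∃ lam : Fin m → ℝ,
            (∀ k, |lam k| < 1) ∧ x = fun n => ∑ k, 2 * β k * lam k * (e k n : ℝ)} := by
        refine ⟨fun k => lam k / s, fun k => ?_, rfl⟩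
        rw [abs_div, abs_of_pos hs, div_lt_one hs]
        exact hlam k
      rw [← hball] at hmem
      exact hmem
    have hx : (fun n => ∑ k, 2 * β k * lam k * (e k n : ℝ))
        = s • (fun n => ∑ k, 2 * β k * (lam k / s) * (e k n : ℝ)) := by
      funext n
      simp only [Pi.smul_apply, smul_eq_mul, Finset.mul_sum]
      refine Finset.sum_congr rfl (fun k _ => ?_)
      field_simp
    calc φ (fun n => ∑ k, 2 * β k * lam k * (e k n : ℝ))
        = |s| * φ (fun n => ∑ k, 2 * β k * (lam k / s) * (e k n : ℝ)) := by rw [hx, hhom]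
      _ = s * φ (fun n => ∑ k, 2 * β k * (lam k / s) * (e k n : ℝ)) := by rw [abs_of_pos hs]
      _ < s * 1 := mul_lt_mul_of_pos_left hy hs
      _ = s := mul_one s
  have upperle : ∀ (lam : Fin m → ℝ) (s : ℝ), 0 ≤ s → (∀ k, |lam k| ≤ s) →
      φ (fun n => ∑ k, 2 * β k * lam k * (e k n : ℝ)) ≤ s := by
    intro lam s hs hlam
    refine le_of_forall_pos_le_add (fun δ hδ => ?_)
    exact le_of_lt (upper lam (s + δ) (by linarith)
      (fun k => lt_of_le_of_lt (hlam k) (by linarith)))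
  -- representation lemma
  have repr : ∀ (x : Fin N → ℝ) (s : ℝ), 0 < s → φ x < s →
      ∃ lam : Fin m → ℝ, (∀ k, |lam k| < s) ∧
        x = fun n => ∑ k, 2 * β k * lam k * (e k n : ℝ) := by
    intro x s hs hx
    have hy : φ (s⁻¹ • x) < 1 := by
      rw [hhom, abs_of_pos (inv_pos.mpr hs)]
      rw [inv_mul_lt_iff₀ hs, mul_one]
      exact hx
    have hmem : s⁻¹ • x ∈ {x : Fin N → ℝ | ∃ lam : Fin m → ℝ,
        (∀ k, |lam k| < 1) ∧ x = fun n => ∑ k, 2 * β k * lam k * (e k n : ℝ)} := by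
      rw [← hball]; exact hy
    obtain ⟨lam', hlam', heqy⟩ := hmem
    refine ⟨fun k => s * lam' k, fun k => ?_, ?_⟩
    · rw [abs_mul, abs_of_pos hs]
      calc s * |lam' k| < s * 1 := mul_lt_mul_of_pos_left (hlam' k) hs
        _ = s := mul_one s
    · funext n
      have h2 : s⁻¹ * x n = ∑ k, 2 * β k * lam' k * (e k n : ℝ) := by
        have := congrFun heqy n
        simpa using this
    -- x n = s * sum
      have hxn : x n = s * ∑ k, 2 * β k * lam' k * (e k n : ℝ) := by
        rw [← h2]
        field_simp
      rw [hxn, Finset.mul_sum]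
      exact Finset.sum_congr rfl (fun k _ => by ring)
  set ι : (Fin N → ℤ) → (Fin N → ℝ) := fun i => fun n => ((i n : ℤ) : ℝ) with hιdef
  have hι0 : ι 0 = 0 := by funext n; simp [hιdef]
  -- main claim at scale 1
  have main : ∀ i : Fin N → ℤ, 2 * (L:ℝ) ≤ φ (ι i) →
      ∃ j : Fin N → ℤ, j ≠ 0 ∧ φ (ι j) ≤ (L:ℝ) ∧
        φ (ι i) = φ (ι j) + φ (ι i - ι j) := by
    intro i hi
    set t := φ (ι i) with htdef
    set jf : (Fin m → ℤ) → (Fin N → ℤ) := fun σ => fun n => ∑ k, c k * σ k * e k n with hjfdef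
    have hjι : ∀ σ : Fin m → ℤ, ι (jf σ)
        = fun n => ∑ k, 2 * β k * ((L:ℝ) * ((σ k : ℤ):ℝ)) * (e k n : ℝ) := by
      intro σ
      funext n
      simp only [hιdef, hjfdef]
      push_cast
      refine Finset.sum_congr rfl (fun k _ => ?_)
      rw [hc k]
      ring
    set S : Finset (Fin m → ℤ) := Fintype.piFinset (fun _ : Fin m => ({-1, 0, 1} : Finset ℤ))
      with hSdef
    have key : ∀ n : ℕ, ∃ σ ∈ S, φ (ι i - ι (jf σ)) ≤ t - (L:ℝ) + 1 / ((n:ℝ) + 1) := by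
      intro n
      set δ : ℝ := 1 / ((n:ℝ) + 1) with hδdef
      have hδpos : 0 < δ := by positivity
      obtain ⟨lam, hlam, hrep⟩ := repr (ι i) (t + δ) (by linarith) (by linarith)
      set σ : Fin m → ℤ := fun k =>
        if t + δ - (L:ℝ) < |lam k| then (if 0 < lam k then 1 else -1) else 0 with hσdef
      have hσS : σ ∈ S := by
        rw [hSdef, Fintype.mem_piFinset]
        intro k
        simp only [hσdef]
        split_ifs <;> simp
      refine ⟨σ, hσS, ?_⟩
      have hdiff : ι i - ι (jf σ)
          = fun n' => ∑ k, 2 * β k * (lam k - (L:ℝ) * ((σ k : ℤ):ℝ)) * (e k n' : ℝ) := by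
        funext n'
        have h1 := congrFun hrep n'
        have h2 := congrFun (hjι σ) n'
        rw [Pi.sub_apply, h1, h2, ← Finset.sum_sub_distrib]
        exact Finset.sum_congr rfl (fun k _ => by ring)
      rw [hdiff]
      apply upperle
      · linarith
      · intro k
        by_cases h1 : t + δ - (L:ℝ) < |lam k|
        · by_cases h2 : 0 < lam k
          · have hσk : σ k = 1 := by simp [hσdef, h1, h2]
            rw [hσk]
            have ha : |lam k| = lam k := abs_of_pos h2
            rw [ha] at h1
            have hup : lam k < t + δ := by
              have := hlam k; rw [ha] at this; exact this
            rw [abs_of_nonneg (by push_cast; linarith)]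
            push_cast
            linarith
          · have hσk : σ k = -1 := by simp [hσdef, h1, h2]
            rw [hσk]
            have hneg : lam k ≤ 0 := not_lt.mp h2
            have ha : |lam k| = -lam k := abs_of_nonpos hneg
            rw [ha] at h1
            have hup : -lam k < t + δ := by
              have := hlam k; rw [ha] at this; exact this
            rw [abs_of_nonpos (by push_cast; linarith)]
            push_cast
            linarith
        · have hσk : σ k = 0 := by simp [hσdef, h1]
          rw [hσk]
          push_cast
          rw [mul_zero, sub_zero]
          linarith [not_lt.mp h1]
    have hSne : S.Nonempty := by
      refine ⟨fun _ => 0, ?_⟩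
      rw [hSdef, Fintype.mem_piFinset]
      intro k; simp
    obtain ⟨σ₀, hσ₀S, hmin⟩ :=
      Finset.exists_min_image S (fun σ => φ (ι i - ι (jf σ))) hSne
    have hG : φ (ι i - ι (jf σ₀)) ≤ t - (L:ℝ) := by
      refine le_of_forall_pos_le_add (fun δ hδ => ?_)
      obtain ⟨n, hn⟩ := exists_nat_one_div_lt hδ
      obtain ⟨σ, hσS, hσle⟩ := key n
      calc φ (ι i - ι (jf σ₀)) ≤ φ (ι i - ι (jf σ)) := hmin σ hσS
        _ ≤ t - (L:ℝ) + 1 / ((n:ℝ) + 1) := hσle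
        _ ≤ t - (L:ℝ) + δ := by push_cast at hn ⊢; linarith
    have hjle : φ (ι (jf σ₀)) ≤ (L:ℝ) := by
      rw [hjι σ₀]
      refine upperle _ _ (Nat.cast_nonneg L) (fun k => ?_)
      have hσk : σ₀ k ∈ ({-1, 0, 1} : Finset ℤ) := (Fintype.mem_piFinset.mp hσ₀S) k
      have : σ₀ k = -1 ∨ σ₀ k = 0 ∨ σ₀ k = 1 := by simpa using hσk
      rcases this with h | h | h <;>
        · rw [h]; push_cast; rw [abs_mul]; simp [abs_of_nonneg (Nat.cast_nonneg L : (0:ℝ) ≤ L)]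
    have htril : t ≤ φ (ι (jf σ₀)) + φ (ι i - ι (jf σ₀)) := by
      have h := htriangle (ι (jf σ₀)) (ι i - ι (jf σ₀))
      have h2 : ι (jf σ₀) + (ι i - ι (jf σ₀)) = ι i := by abel
      rw [h2] at h
      exact h
    have heq : t = φ (ι (jf σ₀)) + φ (ι i - ι (jf σ₀)) := le_antisymm htril (by linarith)
    have hjpos : 0 < φ (ι (jf σ₀)) := by linarith
    have hjne : jf σ₀ ≠ 0 := by
      intro h0
      rw [h0, hι0, hφ0] at hjpos
      exact lt_irrefl _ hjpos
    exact ⟨jf σ₀, hjne, hjle, heq⟩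
  -- final scaling
  refine ⟨(L:ℝ), by positivity, ?_⟩
  intro ε hε i hcond
  have hlat : ∀ j : Fin N → ℤ, latPt N ε j = ε • ι j := by
    intro j; funext n; simp [latPt, hιdef]
  have hφε : ∀ j : Fin N → ℤ, φ (latPt N ε j) = ε * φ (ι j) := by
    intro j; rw [hlat, hhom, abs_of_pos hε]
  have hi : 2 * (L:ℝ) ≤ φ (ι i) := by
    rw [hφε] at hcond
    have h2 : ε * (2 * (L:ℝ)) ≤ ε * φ (ι i) := by linarith
    exact le_of_mul_le_mul_left h2 hε
  obtain ⟨j, hjne, hjle, heq⟩ := main i hi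
  refine ⟨j, hjne, ?_, ?_⟩
  · rw [hφε]
    calc ε * φ (ι j) ≤ ε * (L:ℝ) := by
          exact mul_le_mul_of_nonneg_left hjle (le_of_lt hε)
      _ = ε * (L:ℝ) := rfl
  · have hsub : latPt N ε i - latPt N ε j = ε • (ι i - ι j) := by
      rw [hlat, hlat, smul_sub]
    rw [hφε, hφε, hsub, hhom, abs_of_pos hε, heq]
    ring
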